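/- Let G be a connected solvable complex Lie group that has no positive-dimensional proper closed complex subgroups. Then G is Abelian. -/

import Mathlib

open scoped Manifold
open Set Filter Topology

/-- A topological group charted on a normed space is Hausdorff. -/
theorem aux_t2 {E : Type} [NormedAddCommGroup E] [NormedSpace ℂ E]
    {G : Type} [TopologicalSpace G] [ChartedSpace E G] [Group G] [LieGroup 𝓘(ℂ, E) (⊤ : ℕ∞) G] :
    T2Space G := by
  haveI : IsTopologicalGroup G := topologicalGroup_of_lieGroup 𝓘(ℂ, E) (⊤ : ℕ∞)
  apply IsTopologicalGroup.t2Space_of_one_sep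
  intro x hx
  by_cases hxs : x ∈ (chartAt E (1 : G)).source
  · refine ⟨(chartAt E (1 : G)).source ∩ (chartAt E (1 : G)) ⁻¹' ({(chartAt E (1 : G)) x}ᶜ),
      ?_, ?_⟩
    · refine IsOpen.mem_nhds
        ((chartAt E (1 : G)).continuousOn.isOpen_inter_preimage
          (chartAt E (1 : G)).open_source (isOpen_compl_singleton)) ?_
      refine ⟨mem_chart_source E (1 : G), ?_⟩
      simp only [mem_preimage, mem_compl_iff, mem_singleton_iff]
      exact (chartAt E (1 : G)).injOn.ne (mem_chart_source E (1 : G)) hxs (Ne.symm hx)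
    · rintro ⟨-, hx2⟩
      simp at hx2
  · exact ⟨(chartAt E (1 : G)).source,
      (chartAt E (1 : G)).open_source.mem_nhds (mem_chart_source E (1 : G)), hxs⟩

section Aux

variable {E : Type} [NormedAddCommGroup E] [NormedSpace ℂ E] [FiniteDimensional ℂ E]
  {G : Type} [TopologicalSpace G] [ChartedSpace E G] [Group G] [LieGroup 𝓘(ℂ, E) (⊤ : ℕ∞) G]

/-- Identity theorem: a holomorphic map `ℂ → G` which is `1` on the reals is constant `1`. -/
theorem aux_holo_one {f : ℂ → G} (hf : MDifferentiable 𝓘(ℂ, ℂ) 𝓘(ℂ, E) f)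
    (hreal : ∀ t : ℝ, f (t : ℂ) = 1) (z : ℂ) : f z = 1 := by
  haveI : T2Space G := aux_t2 (E := E)
  set A : Set ℂ := {z | ∀ᶠ w in 𝓝 z, f w = 1} with hA
  have hopen : IsOpen A := isOpen_setOf_eventually_nhds
  have hfc : Continuous f := hf.continuous
  have hone : IsClosed {w : ℂ | f w = 1} := isClosed_eq hfc continuous_const
  have hsub : A ⊆ {w : ℂ | f w = 1} := fun w hw => hw.self_of_nhds
  -- key local step
  have key : ∀ z : ℂ, f z = 1 → (∃ᶠ w in 𝓝[≠] z, f w = 1) → ∀ᶠ w in 𝓝 z, f w = 1 := by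
    intro z hz hfreq
    set e := extChartAt 𝓘(ℂ, E) (1 : G) with he
    have hsrc : IsOpen e.source := isOpen_extChartAt_source (1 : G)
    have hmem : f z ∈ e.source := by rw [hz]; exact mem_extChartAt_source (1 : G)
    obtain ⟨r, hr0, hball⟩ := Metric.isOpen_iff.mp (hsrc.preimage hfc) z hmem
    have hmaps : MapsTo f (Metric.ball z r) ((chartAt E (1 : G)).source) := by
      intro w hw
      have := hball hw
      rwa [he, extChartAt_source] at this
    set g : ℂ → E := fun w => e (f w) with hg
    have hgm : MDifferentiableOn 𝓘(ℂ, ℂ) 𝓘(ℂ, E) g (Metric.ball z r) := by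
      have h1 : ContMDiffOn 𝓘(ℂ, E) 𝓘(ℂ, E) 1 e ((chartAt E (1 : G)).source) :=
        contMDiffOn_extChartAt
      exact (h1.mdifferentiableOn one_ne_zero).comp hf.mdifferentiableOn hmaps
    have hgd : DifferentiableOn ℂ g (Metric.ball z r) := hgm.differentiableOn
    have hgan : AnalyticOnNhd ℂ g (Metric.ball z r) := hgd.analyticOnNhd Metric.isOpen_ball
    have hcan : AnalyticOnNhd ℂ (fun _ => e 1) (Metric.ball z r) := analyticOnNhd_const
    have heq : EqOn g (fun _ => e 1) (Metric.ball z r) := by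
      apply hgan.eqOn_of_preconnected_of_frequently_eq hcan (convex_ball z r).isPreconnected
        (Metric.mem_ball_self hr0)
      exact hfreq.mono fun w hw => by simp [hg, hw]
    have hball1 : ∀ w ∈ Metric.ball z r, f w = 1 := by
      intro w hw
      have h1 : e (f w) = e 1 := heq hw
      have hw1 : f w ∈ e.source := hball hw
      have hw2 : (1 : G) ∈ e.source := mem_extChartAt_source (1 : G)
      exact e.injOn hw1 hw2 h1
    exact eventually_of_mem (Metric.ball_mem_nhds z hr0) hball1
  have hAclosed : IsClosed A := by
    apply isClosed_of_closure_subset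
    intro z hzA
    by_cases hzA' : z ∈ A
    · exact hzA'
    · have hz1 : f z = 1 := hone.closure_subset (closure_mono hsub hzA)
      apply key z hz1
      rw [frequently_nhdsWithin_iff, Filter.frequently_iff]
      intro U hU
      obtain ⟨a, haU, haA⟩ := mem_closure_iff_nhds.mp hzA U hU
      exact ⟨a, haU, hsub haA, fun h => hzA' (h ▸ haA)⟩
  have hA0 : (0 : ℂ) ∈ A := by
    apply key 0 (by simpa using hreal 0)
    have htend : Tendsto (fun n : ℕ => ((1 / (n + 1) : ℝ) : ℂ)) atTop (𝓝[≠] (0 : ℂ)) := by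
      apply tendsto_nhdsWithin_of_tendsto_nhds_of_eventually_within
      · have h1 := tendsto_one_div_add_atTop_nhds_zero_nat (𝕜 := ℝ)
        have h2 := (Complex.continuous_ofReal.tendsto 0).comp h1
        simpa [Function.comp_def, one_div] using h2
      · filter_upwards with n
        simp only [mem_compl_iff, mem_singleton_iff]
        intro h
        have : (1 / (n + 1) : ℝ) = 0 := by exact_mod_cast h
        have hpos : (0 : ℝ) < 1 / (n + 1) := by positivity
        linarith
    exact htend.frequently (Frequently.of_forall fun n => hreal _)
  have hAuniv : A = univ := IsClopen.eq_univ ⟨hAclosed, hopen⟩ ⟨0, hA0⟩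
  have : z ∈ A := hAuniv ▸ mem_univ z
  exact this.self_of_nhds

/-- Centralizers are complex subgroups. -/
theorem aux_centralizer_complex (S : Set G) :
    ∀ φ : ℂ → G, MDifferentiable 𝓘(ℂ, ℂ) 𝓘(ℂ, E) φ →
      (∀ z w : ℂ, φ (z + w) = φ z * φ w) →
      (∀ t : ℝ, φ (t : ℂ) ∈ Subgroup.centralizer S) →
      ∀ z : ℂ, φ z ∈ Subgroup.centralizer S := by
  intro φ hφ hhom hreal z
  have hφ0 : φ 0 = 1 := by
    have h := hhom 0 0
    rw [add_zero] at h
    exact left_eq_mul.mp h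
  have hinv : ∀ w : ℂ, φ (-w) = (φ w)⁻¹ := by
    intro w
    have h := hhom w (-w)
    rw [add_neg_cancel, hφ0] at h
    exact (mul_eq_one_iff_inv_eq.mp h.symm).symm
  rw [Subgroup.mem_centralizer_iff]
  intro s hs
  set F : ℂ → G := fun w => φ w * s * φ (-w) * s⁻¹ with hF
  have hFm : MDifferentiable 𝓘(ℂ, ℂ) 𝓘(ℂ, E) F := by
    have hneg : MDifferentiable 𝓘(ℂ, ℂ) 𝓘(ℂ, ℂ) (fun w : ℂ => -w) :=
      differentiable_neg.mdifferentiable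
    have h1 : MDifferentiable 𝓘(ℂ, ℂ) 𝓘(ℂ, E) (fun w => φ (-w)) := hφ.comp hneg
    have hmul : MDifferentiable (𝓘(ℂ, E).prod 𝓘(ℂ, E)) 𝓘(ℂ, E) (fun p : G × G => p.1 * p.2) :=
      (contMDiff_mul 𝓘(ℂ, E) ((⊤ : ℕ∞) : WithTop ℕ∞)).mdifferentiable (by simp)
    have h2 : MDifferentiable 𝓘(ℂ, ℂ) 𝓘(ℂ, E) (fun w => φ w * s) :=
      ((contMDiff_mul_right (n := ((⊤ : ℕ∞) : WithTop ℕ∞))).mdifferentiable (by simp)).comp hφ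
    have h3 : MDifferentiable 𝓘(ℂ, ℂ) 𝓘(ℂ, E) (fun w => φ w * s * φ (-w)) :=
      hmul.comp (h2.prodMk h1)
    exact ((contMDiff_mul_right (n := ((⊤ : ℕ∞) : WithTop ℕ∞))).mdifferentiable (by simp)).comp h3
  have hFreal : ∀ t : ℝ, F (t : ℂ) = 1 := by
    intro t
    have hc := Subgroup.mem_centralizer_iff.mp (hreal t) s hs
    have hiv := hinv (t : ℂ)
    rw [hF]
    simp only [hiv]
    rw [← hc, mul_assoc (s * φ (t : ℂ))]
    group
  have hFz : F z = 1 := aux_holo_one hFm hFreal z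
  rw [hF] at hFz
  simp only [hinv z] at hFz
  have h1 : φ z * s * (φ z)⁻¹ = s := by
    have := congrArg (· * s) hFz
    simpa [mul_assoc] using this
  calc s * φ z = (φ z * s * (φ z)⁻¹) * φ z := by rw [h1]
    _ = φ z * s := by group

end Aux

/-- A connected solvable complex Lie group with no positive-dimensional proper closed complex
subgroup is Abelian. Here a closed subgroup `H` is a *complex* subgroup iff it absorbs the
complexification of every holomorphic one-parameter subgroup whose real points lie in `H`,
and positive-dimensional means non-discrete. -/
theorem solvable_no_proper_complex_subgroup_abelian
    (E : Type) [NormedAddCommGroup E] [NormedSpace ℂ E] [FiniteDimensional ℂ E]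
    (G : Type) [TopologicalSpace G] [ChartedSpace E G] [Group G]
    [LieGroup 𝓘(ℂ, E) (⊤ : ℕ∞) G] [ConnectedSpace G] [Group.IsSolvable G]
    (hno : ∀ H : Subgroup G, IsClosed (H : Set G) → H ≠ ⊤ →
      (∀ φ : ℂ → G, MDifferentiable 𝓘(ℂ, ℂ) 𝓘(ℂ, E) φ →
        (∀ z w : ℂ, φ (z + w) = φ z * φ w) →
        (∀ t : ℝ, φ (t : ℂ) ∈ H) → ∀ z : ℂ, φ z ∈ H) →
      DiscreteTopology H) :
    ∀ a b : G, a * b = b * a := by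
  intro a b
  haveI : T2Space G := aux_t2 (E := E)
  haveI : IsTopologicalGroup G := topologicalGroup_of_lieGroup 𝓘(ℂ, E) (⊤ : ℕ∞)
  -- centralizers are closed
  have hcl : ∀ S : Set G, IsClosed ((Subgroup.centralizer S : Subgroup G) : Set G) := by
    intro S
    have hEq : ((Subgroup.centralizer S : Subgroup G) : Set G)
        = ⋂ s ∈ S, {g : G | s * g = g * s} := by
      ext g
      simp [SetLike.mem_coe, Subgroup.mem_centralizer_iff]
    rw [hEq]
    exact isClosed_biInter fun s _ =>
      isClosed_eq (continuous_mul_left s) (continuous_mul_right s)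
  -- dichotomy for centralizers
  have hdich : ∀ S : Set G,
      Subgroup.centralizer S = ⊤ ∨ DiscreteTopology (Subgroup.centralizer S) := by
    intro S
    by_cases h : Subgroup.centralizer S = ⊤
    · exact Or.inl h
    · exact Or.inr (hno _ (hcl S) h (aux_centralizer_complex S))
  -- a connected subset of a discrete subgroup containing 1 is {1}
  have hshrink : ∀ U : Subgroup G, DiscreteTopology U → ∀ W : Set G,
      IsPreconnected W → (1 : G) ∈ W → W ⊆ (U : Set G) → W ⊆ {1} := by
    intro U hU W hW h1W hWU x hx
    haveI := hU
    have hWsub : W ⊆ Set.range (Subtype.val : U → G) := by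
      intro w hw; exact ⟨⟨w, hWU hw⟩, rfl⟩
    have himg : (Subtype.val : U → G) '' (Subtype.val ⁻¹' W) = W :=
      Set.image_preimage_eq_of_subset hWsub
    have hpre : IsPreconnected ((Subtype.val : U → G) ⁻¹' W) := by
      have hW' := hW
      rw [← himg] at hW'
      exact Topology.IsInducing.subtypeVal.isPreconnected_image.mp hW'
    have hsing := hpre.subsingleton
    have e1 : (⟨1, U.one_mem⟩ : U) ∈ (Subtype.val ⁻¹' W : Set U) := h1W
    have ex : (⟨x, hWU hx⟩ : U) ∈ (Subtype.val ⁻¹' W : Set U) := hx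
    have := hsing ex e1
    simpa [Subtype.ext_iff] using this
  by_cases hZ : Subgroup.centralizer (Set.univ : Set G) = ⊤
  · have hb : b ∈ Subgroup.centralizer (Set.univ : Set G) := by rw [hZ]; trivial
    exact Subgroup.mem_centralizer_iff.mp hb a (Set.mem_univ a)
  · have hdisc : DiscreteTopology (Subgroup.centralizer (Set.univ : Set G)) :=
      (hdich Set.univ).resolve_left hZ
    set c : G × G → G := fun p => p.1 * p.2 * p.1⁻¹ * p.2⁻¹ with hcdef
    have hc : Continuous c := by
      haveI : ContinuousInv G := inferInstance
      fun_prop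
    set T : ℕ → Set G := fun k => Nat.rec Set.univ (fun _ Tk => c '' (Tk ×ˢ Tk)) k with hTdef
    have hTsucc : ∀ k, T (k + 1) = c '' (T k ×ˢ T k) := fun k => rfl
    have hconn : ∀ k, IsConnected (T k) := by
      intro k; induction k with
      | zero => exact isConnected_univ
      | succ k ih =>
        rw [hTsucc]
        exact (ih.prod ih).image c hc.continuousOn
    have hone : ∀ k, (1 : G) ∈ T k := by
      intro k; induction k with
      | zero => trivial
      | succ k ih =>
        rw [hTsucc]
        exact ⟨(1, 1), Set.mk_mem_prod ih ih, by simp [hcdef]⟩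
    have hder : ∀ k, T k ⊆ (derivedSeries G k : Set G) := by
      intro k; induction k with
      | zero => intro x _; simp [derivedSeries_zero]
      | succ k ih =>
        rw [hTsucc]
        rintro x ⟨⟨p, q⟩, ⟨hp, hq⟩, rfl⟩
        open scoped commutatorElement in
        have hcpq : c (p, q) = ⁅p, q⁆ := by
          simp [hcdef, commutatorElement_def]
        rw [SetLike.mem_coe, derivedSeries_succ, hcpq]
        exact Subgroup.commutator_mem_commutator (ih hp) (ih hq)
    -- downward induction step
    have hstep : ∀ k, T (k + 1) ⊆ (Subgroup.centralizer (Set.univ : Set G) : Set G) →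
        T k ⊆ (Subgroup.centralizer (Set.univ : Set G) : Set G) := by
      intro k hk
      rcases hdich (T k) with h | h
      · intro x hx
        rw [SetLike.mem_coe, Subgroup.mem_centralizer_iff]
        intro g _
        have hg : g ∈ Subgroup.centralizer (T k) := by rw [h]; trivial
        exact (Subgroup.mem_centralizer_iff.mp hg x hx).symm
      · have h1 : T (k + 1) ⊆ {1} :=
          hshrink _ hdisc _ (hconn (k + 1)).isPreconnected (hone (k + 1)) hk
        have habel : T k ⊆ (Subgroup.centralizer (T k) : Set G) := by
          intro x hx
          rw [SetLike.mem_coe, Subgroup.mem_centralizer_iff]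
          intro y hy
          have hcyx : c (y, x) = 1 := h1 ⟨(y, x), Set.mk_mem_prod hy hx, rfl⟩
          have : y * x * y⁻¹ * x⁻¹ = 1 := hcyx
          calc y * x = (y * x * y⁻¹ * x⁻¹) * (x * y) := by group
            _ = x * y := by rw [this, one_mul]
        have hTk1 : T k ⊆ {1} :=
          hshrink _ h _ (hconn k).isPreconnected (hone k) habel
        intro x hx
        have hx1 : x = 1 := hTk1 hx
        rw [hx1]
        exact (Subgroup.centralizer (Set.univ : Set G)).one_mem
    obtain ⟨n, hn⟩ := Group.IsSolvable.solvable (G := G)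
    have hTn : T n ⊆ (Subgroup.centralizer (Set.univ : Set G) : Set G) := by
      intro x hx
      have hx' := hder n hx
      rw [hn] at hx'
      have hx1 : x = 1 := by simpa using hx'
      rw [hx1]
      exact (Subgroup.centralizer (Set.univ : Set G)).one_mem
    have hdesc : ∀ k, T k ⊆ (Subgroup.centralizer (Set.univ : Set G) : Set G) →
        T 0 ⊆ (Subgroup.centralizer (Set.univ : Set G) : Set G) := by
      intro k; induction k with
      | zero => exact id
      | succ k ih => intro h; exact ih (hstep k h)
    have hT0 := hdesc n hTn
    have hb : b ∈ Subgroup.centralizer (Set.univ : Set G) := hT0 (Set.mem_univ b)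
    exact Subgroup.mem_centralizer_iff.mp hb a (Set.mem_univ a)
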